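/- arXiv:quant-ph/0208115 — 3 statements merged into one kernel-verified Lean document; each statement's English description precedes it below -/
import Mathlib

section
/- For a pure compound state ω = ψψ† on ℂ^m ⊗ ℂ^n with reduced state ρ = Tr_2(ω), the entangled entropy E = Tr ω log( ω^{1/2}(ρ⁻ ⊗ I)ω^{1/2} ) equals log(rank ρ), which is nonnegative, and is strictly positive iff the Schmidt rank of ψ exceeds 1. -/
open Matrix Kronecker
open scoped ComplexOrder

noncomputable section
open Classical

/-- Hermitian functional calculus, extended by junk value `0` to non-Hermitian matrices. -/
def matCFC {d : Type*} [Fintype d] [DecidableEq d] (f : ℝ → ℝ)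
    (A : Matrix d d ℂ) : Matrix d d ℂ :=
  if h : A.IsHermitian then h.cfc f else 0

/-- Matrix logarithm (spectral, with `Real.log 0 = 0` on the kernel). -/
def matLog {d : Type*} [Fintype d] [DecidableEq d] (A : Matrix d d ℂ) : Matrix d d ℂ :=
  matCFC Real.log A

/-- Moore–Penrose pseudoinverse of a Hermitian matrix (junk value `0` otherwise). -/
def matPinv {d : Type*} [Fintype d] [DecidableEq d] (A : Matrix d d ℂ) : Matrix d d ℂ :=
  matCFC (·⁻¹) A

/-- Positive square root of a positive semidefinite matrix (junk value `0` otherwise). -/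
def matSqrt {d : Type*} [Fintype d] [DecidableEq d] (A : Matrix d d ℂ) : Matrix d d ℂ :=
  if h : A.PosSemidef then
    (h.1.eigenvectorUnitary : Matrix d d ℂ) * diagonal ((↑) ∘ (√·) ∘ h.1.eigenvalues) *
      (star h.1.eigenvectorUnitary : Matrix d d ℂ)
  else 0

/-- von Neumann entropy `-∑ λᵢ log λᵢ` (junk value `0` for non-Hermitian matrices). -/
def vN {d : Type*} [Fintype d] [DecidableEq d] (A : Matrix d d ℂ) : ℝ :=
  if h : A.IsHermitian then -∑ i, (h.eigenvalues i) * Real.log (h.eigenvalues i) else 0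

/-- Belavkin–Staszewski relative entropy `Tr ω log(ω^{1/2} φ⁻ ω^{1/2})`. -/
def RBS {d : Type*} [Fintype d] [DecidableEq d] (ω φ : Matrix d d ℂ) : ℝ :=
  ((ω * matLog (matSqrt ω * matPinv φ * matSqrt ω)).trace).re

/-- Partial trace over the second tensor factor. -/
def ptraceR {m n : Type*} [Fintype m] [Fintype n]
    (M : Matrix (m × n) (m × n) ℂ) : Matrix m m ℂ :=
  Matrix.of fun i j => ∑ k, M (i, k) (j, k)

/-- Partial trace over the first tensor factor. -/
def ptraceL {m n : Type*} [Fintype m] [Fintype n]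
    (M : Matrix (m × n) (m × n) ℂ) : Matrix n n ℂ :=
  Matrix.of fun k l => ∑ i, M (i, k) (i, l)




section Aux

lemma quad_eq_trace {m n : ℕ} (ψ : Fin m × Fin n → ℂ)
    (A : Matrix (Fin m) (Fin m) ℂ) :
    star ψ ⬝ᵥ ((A ⊗ₖ (1 : Matrix (Fin n) (Fin n) ℂ)) *ᵥ ψ) =
      (A * ptraceR (Matrix.of fun p q => ψ p * star (ψ q))).trace := by
  simp only [dotProduct, Matrix.mulVec, Matrix.trace, Matrix.diag, Matrix.mul_apply,
    ptraceR, Matrix.of_apply, Matrix.kroneckerMap_apply, Matrix.one_apply,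
    Fintype.sum_prod_type, Pi.star_apply, mul_ite, mul_one, mul_zero,
    Finset.sum_ite_eq', Finset.mem_univ, if_true, Finset.mul_sum, Finset.sum_mul]
  refine Finset.sum_congr rfl fun i _ => ?_
  rw [Finset.sum_comm]
  refine Finset.sum_congr rfl fun j _ => Finset.sum_congr rfl fun k _ => ?_
  simp only [mul_ite, mul_zero, ite_mul, zero_mul, Finset.sum_ite_eq, Finset.mem_univ, if_true]
  ring

lemma trace_pinv_mul_self {d : ℕ} (ρ : Matrix (Fin d) (Fin d) ℂ)
    (hρ : ρ.IsHermitian) :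
    (matPinv ρ * ρ).trace = (ρ.rank : ℂ) := by
  rw [matPinv, matCFC, dif_pos hρ, Matrix.IsHermitian.cfc, Unitary.conjStarAlgAut_apply]
  set U : Matrix (Fin d) (Fin d) ℂ := (hρ.eigenvectorUnitary : Matrix (Fin d) (Fin d) ℂ) with hUdef
  set D₁ := Matrix.diagonal ((RCLike.ofReal : ℝ → ℂ) ∘ (·⁻¹) ∘ hρ.eigenvalues) with hD1
  have hdiag : star U * ρ * U = Matrix.diagonal (RCLike.ofReal ∘ hρ.eigenvalues) :=
    by simpa [Unitary.conjStarAlgAut_apply] using hρ.conjStarAlgAut_star_eigenvectorUnitary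
  rw [Matrix.mul_assoc (U * D₁), Matrix.trace_mul_comm, ← Matrix.mul_assoc, hdiag,
    Matrix.diagonal_mul_diagonal, Matrix.trace_diagonal]
  rw [hρ.rank_eq_card_non_zero_eigs, Fintype.card_subtype, Finset.card_eq_sum_ones,
    Nat.cast_sum, Finset.sum_filter]
  refine Finset.sum_congr rfl fun i _ => ?_
  by_cases h : hρ.eigenvalues i = 0
  · simp [h]
  · simp only [h, if_false, Function.comp_apply, RCLike.ofReal_inv, Nat.cast_one]
    rw [mul_inv_cancel₀ (RCLike.ofReal_ne_zero.mpr h)]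
    simp [h]

end Aux

theorem stmt5 {m n : ℕ} (ψ : Fin m × Fin n → ℂ) (hψ : ∑ p, ‖ψ p‖ ^ 2 = 1)
    (ρ : Matrix (Fin m) (Fin m) ℂ)
    (hρdef : ρ = ptraceR (Matrix.of fun p q => ψ p * star (ψ q))) :
    Real.log ((star ψ ⬝ᵥ ((matPinv ρ ⊗ₖ (1 : Matrix (Fin n) (Fin n) ℂ)) *ᵥ ψ)).re) =
      Real.log ρ.rank ∧
    0 ≤ Real.log ρ.rank ∧
    (0 < Real.log ρ.rank ↔ 1 < ρ.rank) := by
  have hherm : ρ.IsHermitian := by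
    rw [hρdef]
    ext i j
    simp only [Matrix.conjTranspose_apply, ptraceR, Matrix.of_apply, star_sum, star_mul',
      star_star]
    exact Finset.sum_congr rfl fun k _ => mul_comm _ _
  have hval : (star ψ ⬝ᵥ ((matPinv ρ ⊗ₖ (1 : Matrix (Fin n) (Fin n) ℂ)) *ᵥ ψ)) = (ρ.rank : ℂ) := by
    rw [quad_eq_trace ψ (matPinv ρ), ← hρdef, trace_pinv_mul_self ρ hherm]
  refine ⟨by rw [hval, Complex.natCast_re], Real.log_natCast_nonneg _, ?_⟩
  rcases Nat.eq_zero_or_pos ρ.rank with h | h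
  · simp [h]
  · rw [Real.log_pos_iff (Nat.cast_nonneg _), Nat.one_lt_cast]


end
end

section
/- Belavkin–Staszewski relative entropy positivity: for density matrices ω, φ on ℂ^d with φ positive definite, R(ω:φ) := Tr ω log( ω^{1/2} φ⁻¹ ω^{1/2} ) ≥ 0, with equality if ω = φ. -/
open Matrix Kronecker
open scoped ComplexOrder

noncomputable section
open Classical

namespace BSaux
variable {n : Type*} [Fintype n] [DecidableEq n] {A : Matrix n n ℂ}

lemma UstarU (hA : A.IsHermitian) :
    (star (hA.eigenvectorUnitary : Matrix n n ℂ)) * (hA.eigenvectorUnitary : Matrix n n ℂ) = 1 :=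
  (Matrix.mem_unitaryGroup_iff').mp (hA.eigenvectorUnitary).2

lemma UUstar (hA : A.IsHermitian) :
    (hA.eigenvectorUnitary : Matrix n n ℂ) * (star (hA.eigenvectorUnitary : Matrix n n ℂ)) = 1 :=
  (Matrix.mem_unitaryGroup_iff).mp (hA.eigenvectorUnitary).2

lemma cfc_mul (hA : A.IsHermitian) (f g : ℝ → ℝ) :
    hA.cfc f * hA.cfc g = hA.cfc (fun x => f x * g x) := by
  unfold Matrix.IsHermitian.cfc
  simp only [Unitary.conjStarAlgAut_apply]
  set U := (hA.eigenvectorUnitary : Matrix n n ℂ)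
  have : U * Matrix.diagonal (RCLike.ofReal ∘ f ∘ hA.eigenvalues) * star U *
      (U * Matrix.diagonal (RCLike.ofReal ∘ g ∘ hA.eigenvalues) * star U)
      = U * (Matrix.diagonal (RCLike.ofReal ∘ f ∘ hA.eigenvalues) * (star U * U) *
          Matrix.diagonal (RCLike.ofReal ∘ g ∘ hA.eigenvalues)) * star U := by
    simp only [Matrix.mul_assoc]
  rw [this, UstarU hA, mul_one, Matrix.diagonal_mul_diagonal]
  congr 1
  ext i j
  by_cases h : i = j <;> simp [Matrix.diagonal, h]

lemma cfc_congr (hA : A.IsHermitian) {f g : ℝ → ℝ}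
    (h : ∀ i, f (hA.eigenvalues i) = g (hA.eigenvalues i)) : hA.cfc f = hA.cfc g := by
  unfold Matrix.IsHermitian.cfc
  have hDD : (Matrix.diagonal (RCLike.ofReal ∘ f ∘ hA.eigenvalues) : Matrix n n ℂ)
      = Matrix.diagonal (RCLike.ofReal ∘ g ∘ hA.eigenvalues) := by
    ext i j
    rcases eq_or_ne i j with rfl | hij
    · simp [h i]
    · simp [Matrix.diagonal_apply_ne _ hij]
  rw [hDD]

lemma cfc_one (hA : A.IsHermitian) : hA.cfc (fun _ => 1) = 1 := by
  unfold Matrix.IsHermitian.cfc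
  simp only [Unitary.conjStarAlgAut_apply]
  have : Matrix.diagonal (RCLike.ofReal ∘ (fun _ => (1:ℝ)) ∘ hA.eigenvalues)
      = (1 : Matrix n n ℂ) := by
    ext i j; by_cases h : i = j <;> simp [Matrix.diagonal, Matrix.one_apply, h]
  rw [this, mul_one, UUstar hA]

lemma cfc_zero (hA : A.IsHermitian) : hA.cfc (fun _ => 0) = 0 := by
  unfold Matrix.IsHermitian.cfc
  simp only [Unitary.conjStarAlgAut_apply]
  have : Matrix.diagonal (RCLike.ofReal ∘ (fun _ => (0:ℝ)) ∘ hA.eigenvalues)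
      = (0 : Matrix n n ℂ) := by
    ext i j; by_cases h : i = j <;> simp [Matrix.diagonal, h]
  rw [this, mul_zero, zero_mul]

lemma cfc_id (hA : A.IsHermitian) : hA.cfc (fun x => x) = A := by
  unfold Matrix.IsHermitian.cfc
  exact (hA.spectral_theorem).symm

lemma cfc_herm (hA : A.IsHermitian) (f : ℝ → ℝ) : (hA.cfc f).IsHermitian := by
  unfold Matrix.IsHermitian.cfc
  simp only [Unitary.conjStarAlgAut_apply]
  unfold Matrix.IsHermitian
  have hD : (Matrix.diagonal (RCLike.ofReal ∘ f ∘ hA.eigenvalues) : Matrix n n ℂ)ᴴ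
      = Matrix.diagonal (RCLike.ofReal ∘ f ∘ hA.eigenvalues) := by
    rw [Matrix.diagonal_conjTranspose]
    ext i j
    rcases eq_or_ne i j with rfl | h
    · simp [Complex.conj_ofReal]
    · simp [Matrix.diagonal_apply_ne _ h]
  rw [Matrix.star_eq_conjTranspose, Matrix.conjTranspose_mul, Matrix.conjTranspose_mul, hD]
  simp only [Matrix.mul_assoc, ← Matrix.star_eq_conjTranspose, star_star]

lemma trace_mul_cfc (hA : A.IsHermitian) (M : Matrix n n ℂ) (f : ℝ → ℝ) :
    (M * hA.cfc f).trace = ∑ i, (f (hA.eigenvalues i) : ℂ) *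
      ((star (hA.eigenvectorUnitary : Matrix n n ℂ)) * M *
        (hA.eigenvectorUnitary : Matrix n n ℂ)) i i := by
  unfold Matrix.IsHermitian.cfc
  simp only [Unitary.conjStarAlgAut_apply]
  set U := (hA.eigenvectorUnitary : Matrix n n ℂ)
  set D : Matrix n n ℂ := Matrix.diagonal (RCLike.ofReal ∘ f ∘ hA.eigenvalues) with hD
  have h1 : M * (U * D * star U) = (M * U) * D * star U := by simp only [Matrix.mul_assoc]
  have h2 : star U * (M * U) = star U * M * U := by simp only [Matrix.mul_assoc]
  rw [h1, Matrix.trace_mul_cycle, h2, Matrix.trace]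
  have key : ∀ i, ((star U * M * U) * D) i i
      = (f (hA.eigenvalues i) : ℂ) * (star U * M * U) i i := by
    intro i
    rw [show D = Matrix.diagonal (RCLike.ofReal ∘ f ∘ hA.eigenvalues) from rfl,
      Matrix.mul_diagonal]
    simp only [Function.comp_apply]
    exact mul_comm _ _
  simp only [Matrix.diag_apply, key]

lemma diag_entry_eq (M : Matrix n n ℂ) (U : Matrix n n ℂ) (i : n) :
    ((star U) * M * U) i i = dotProduct (star (fun j => U j i)) (M *ᵥ (fun j => U j i)) := by
  simp only [Matrix.mul_apply, dotProduct, Matrix.mulVec, Matrix.star_eq_conjTranspose,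
    Matrix.conjTranspose_apply, Pi.star_apply, dotProduct, Finset.sum_mul,
    Finset.mul_sum]
  rw [Finset.sum_comm]
  congr 1; ext j; congr 1; ext k; ring

lemma psd_trace_nonneg {M : Matrix n n ℂ} (hM : M.PosSemidef) : 0 ≤ M.trace := by
  have : ∀ i, 0 ≤ M i i := by
    intro i
    have := hM.dotProduct_mulVec_nonneg (Pi.single i 1)
    simpa [dotProduct, Matrix.mulVec, Pi.single_apply] using this
  exact Finset.sum_nonneg fun i _ => this i

lemma matPinv_posDef {φ : Matrix n n ℂ} (hφ : φ.PosDef) : matPinv φ = φ⁻¹ := by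
  rw [matPinv, matCFC, dif_pos hφ.1]
  refine (Matrix.inv_eq_left_inv ?_).symm
  calc hφ.1.cfc (·⁻¹) * φ = hφ.1.cfc (fun x => x⁻¹) * hφ.1.cfc (fun x => x) := by
        rw [cfc_id]
    _ = hφ.1.cfc (fun x => x⁻¹ * x) := cfc_mul _ _ _
    _ = hφ.1.cfc (fun _ => 1) := cfc_congr _ (fun i => by
        field_simp [(hφ.eigenvalues_pos i).ne'])
    _ = 1 := cfc_one _

lemma matLog_one : matLog (1 : Matrix n n ℂ) = 0 := by
  have h1 : (1 : Matrix n n ℂ).IsHermitian := Matrix.isHermitian_one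
  rw [matLog, matCFC, dif_pos h1]
  have hev : ∀ i, h1.eigenvalues i = 1 := by
    intro i
    have hd : star (h1.eigenvectorUnitary : Matrix n n ℂ) * 1 * (h1.eigenvectorUnitary : Matrix n n ℂ)
        = diagonal (RCLike.ofReal ∘ h1.eigenvalues) := by
      have := h1.conjStarAlgAut_star_eigenvectorUnitary
      rwa [Unitary.conjStarAlgAut_star_apply] at this
    rw [Matrix.mul_one, UstarU h1] at hd
    have := congrFun (congrFun hd i) i
    simp only [Matrix.one_apply_eq, Matrix.diagonal_apply_eq, Function.comp_apply] at this
    have h2 : (RCLike.ofReal (h1.eigenvalues i) : ℂ) = (RCLike.ofReal (1:ℝ) : ℂ) := by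
      rw [RCLike.ofReal_one]; exact this.symm
    exact RCLike.ofReal_inj.mp h2
  calc h1.cfc Real.log = h1.cfc (fun _ => 0) :=
        cfc_congr _ (fun i => by rw [hev i, Real.log_one])
    _ = 0 := cfc_zero _

lemma matSqrt_eq (hA : A.PosSemidef) : matSqrt A = hA.1.cfc Real.sqrt := by
  rw [matSqrt, dif_pos hA]; unfold Matrix.IsHermitian.cfc; rfl

lemma matSqrt_herm (hA : A.PosSemidef) : (matSqrt A).IsHermitian := by
  rw [matSqrt_eq hA]; exact cfc_herm _ _

lemma matSqrt_mul_self (hA : A.PosSemidef) : matSqrt A * matSqrt A = A := by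
  rw [matSqrt_eq hA, cfc_mul]
  conv_rhs => rw [← cfc_id hA.1]
  exact cfc_congr _ (fun i => Real.mul_self_sqrt (hA.eigenvalues_nonneg i))

end BSaux

set_option maxHeartbeats 2000000

theorem stmt6 {d : ℕ} (ω φ : Matrix (Fin d) (Fin d) ℂ)
    (hω : ω.PosSemidef) (hωtr : ω.trace = 1)
    (hφ : φ.PosDef) (hφtr : φ.trace = 1) :
    0 ≤ RBS ω φ ∧ (ω = φ → RBS ω φ = 0) := by
  have hdet : IsUnit φ.det := hφ.det_pos.ne'.isUnit
  have hφφi : φ * φ⁻¹ = 1 := Matrix.mul_nonsing_inv _ hdet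
  have hφiφ : φ⁻¹ * φ = 1 := Matrix.nonsing_inv_mul _ hdet
  have hPinv : matPinv φ = φ⁻¹ := BSaux.matPinv_posDef hφ
  have hSdef : matSqrt ω = matSqrt ω := rfl
  set S := matSqrt ω with hSd
  have hSH : S.IsHermitian := BSaux.matSqrt_herm hω
  have hSS : S * S = ω := BSaux.matSqrt_mul_self hω
  have hφinv : (φ⁻¹).PosDef := hφ.inv
  set G := matSqrt φ⁻¹ with hGd
  have hGH : G.IsHermitian := BSaux.matSqrt_herm hφinv.posSemidef
  have hGG : G * G = φ⁻¹ := BSaux.matSqrt_mul_self hφinv.posSemidef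
  set C : Matrix (Fin d) (Fin d) ℂ := G * S with hCd
  have hCstar : Cᴴ = S * G := by
    rw [hCd, Matrix.conjTranspose_mul, hSH.eq, hGH.eq]
  set A : Matrix (Fin d) (Fin d) ℂ := S * φ⁻¹ * S with hAdef
  have hACC : A = Cᴴ * C := by
    rw [hCstar, hCd, hAdef, ← hGG]
    simp only [Matrix.mul_assoc]
  have hApsd : A.PosSemidef := hACC ▸ Matrix.posSemidef_conjTranspose_mul_self C
  have hA : A.IsHermitian := hApsd.1
  set U : Matrix (Fin d) (Fin d) ℂ := (hA.eigenvectorUnitary : Matrix (Fin d) (Fin d) ℂ) with hU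
  set lam : Fin d → ℝ := hA.eigenvalues with hlam
  set w : Fin d → ℂ := fun i => ((star U) * ω * U) i i with hwdef
  have hwv : ∀ i, w i = dotProduct (star (fun j => U j i)) (ω *ᵥ (fun j => U j i)) :=
    fun i => BSaux.diag_entry_eq ω U i
  have hwpos : ∀ i, 0 ≤ w i := fun i => (hwv i) ▸ hω.dotProduct_mulVec_nonneg _
  set r : Fin d → ℝ := fun i => (w i).re with hrdef
  have hrw : ∀ i, w i = (r i : ℂ) := by
    intro i
    have him : 0 = (w i).im := (Complex.nonneg_iff.mp (hwpos i)).2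
    apply Complex.ext
    · simp [hrdef]
    · simp [← him]
  have hrnn : ∀ i, 0 ≤ r i := fun i => (Complex.nonneg_iff.mp (hwpos i)).1
  -- the argument of the log is A
  have harg : matSqrt ω * matPinv φ * matSqrt ω = A := by
    rw [hPinv, hAdef]
  -- kernel fact : zero eigenvalue forces zero weight
  have hker : ∀ i, lam i = 0 → r i = 0 := by
    intro i h0
    have h0' : hA.eigenvalues i = 0 := h0
    have hAvv : dotProduct (star (fun j => U j i)) (A *ᵥ (fun j => U j i)) = 0 := by
      have hd : star U * A * U = diagonal (RCLike.ofReal ∘ hA.eigenvalues) := by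
        have := hA.conjStarAlgAut_star_eigenvectorUnitary
        rwa [Unitary.conjStarAlgAut_star_apply] at this
      have hentry := congrFun (congrFun hd i) i
      rw [(BSaux.diag_entry_eq A U i).symm, hentry]
      simp [h0']
    set v : Fin d → ℂ := fun j => U j i with hv
    have hCv : C *ᵥ v = 0 := by
      rw [hACC] at hAvv
      rw [← Matrix.mulVec_mulVec, Matrix.dotProduct_mulVec, ← Matrix.star_mulVec] at hAvv
      exact dotProduct_star_self_eq_zero.mp hAvv
    have hSv : S *ᵥ v = 0 := by
      have h1 : G *ᵥ (S *ᵥ v) = 0 := by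
        rw [Matrix.mulVec_mulVec, ← hCd, hCv]
      have h2 : φ⁻¹ *ᵥ (S *ᵥ v) = 0 := by
        rw [← hGG, ← Matrix.mulVec_mulVec, h1, Matrix.mulVec_zero]
      calc S *ᵥ v = (φ * φ⁻¹) *ᵥ (S *ᵥ v) := by rw [hφφi, Matrix.one_mulVec]
        _ = φ *ᵥ (φ⁻¹ *ᵥ (S *ᵥ v)) := (Matrix.mulVec_mulVec _ _ _).symm
        _ = 0 := by rw [h2, Matrix.mulVec_zero]
    have hwz : w i = 0 := by
      rw [hwv i, ← hSS, ← Matrix.mulVec_mulVec, hSv, Matrix.mulVec_zero,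
        dotProduct_zero]
    rw [hrdef]
    simp [hwz]
  -- trace formula for RBS
  have hRBS : RBS ω φ = ∑ i, Real.log (lam i) * r i := by
    rw [RBS, harg, matLog, matCFC, dif_pos hA, BSaux.trace_mul_cfc hA ω Real.log,
      Complex.re_sum]
    congr 1
    funext i
    rw [show ((star (hA.eigenvectorUnitary : Matrix (Fin d) (Fin d) ℂ)) * ω *
        (hA.eigenvectorUnitary : Matrix (Fin d) (Fin d) ℂ)) i i = w i from rfl,
      hrw i, ← Complex.ofReal_mul]
    exact Complex.ofReal_re _
  -- sum of weights is 1
  have hsum1 : ∑ i, r i = 1 := by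
    have h1 : (ω * hA.cfc (fun _ => 1)).trace = ∑ i, w i := by
      rw [BSaux.trace_mul_cfc hA ω (fun _ => 1)]
      simp
      rfl
    rw [BSaux.cfc_one, Matrix.mul_one, hωtr] at h1
    have h2 := congrArg Complex.re h1
    rw [Complex.re_sum] at h2
    simpa [hrdef] using h2.symm
  -- the pseudoinverse bound
  set Ap := hA.cfc (fun x => x⁻¹) with hApdef
  have hApH : Ap.IsHermitian := BSaux.cfc_herm hA _
  have htr : (ω * Ap).trace = ∑ i, (((lam i)⁻¹ : ℝ) : ℂ) * w i := BSaux.trace_mul_cfc hA ω _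
  set Q : Matrix (Fin d) (Fin d) ℂ := C * Ap * Cᴴ with hQd
  have hQH : Qᴴ = Q := by
    rw [hQd]
    calc (C * Ap * Cᴴ)ᴴ = Cᴴᴴ * (C * Ap)ᴴ := Matrix.conjTranspose_mul _ _
      _ = C * (Apᴴ * Cᴴ) := by rw [Matrix.conjTranspose_conjTranspose, Matrix.conjTranspose_mul]
      _ = C * Ap * Cᴴ := by rw [hApH.eq, hCd]; simp only [Matrix.mul_assoc]

  have hAAp : Ap * A * Ap = Ap := by
    have e1 : Ap * hA.cfc (fun x => x) * Ap = Ap := by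
      rw [hApdef]
      simp only [BSaux.cfc_mul]
      apply BSaux.cfc_congr
      intro i
      rcases eq_or_ne (hA.eigenvalues i) 0 with h | h
      · rw [h]; simp
      · field_simp
    calc Ap * A * Ap = Ap * hA.cfc (fun x => x) * Ap := by rw [BSaux.cfc_id]
      _ = Ap := e1
  have hQQ : Q * Q = Q := by
    rw [hQd]
    have e1 : (C * Ap * Cᴴ) * (C * Ap * Cᴴ) = C * (Ap * (Cᴴ * C) * Ap) * Cᴴ := by
      simp only [Matrix.mul_assoc]
    rw [e1, ← hACC, hAAp]
  have h1Q : (1 - Q).PosSemidef := by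
    have h2 : (1 - Q)ᴴ * (1 - Q) = 1 - Q := by
      rw [Matrix.conjTranspose_sub, Matrix.conjTranspose_one, hQH]
      have e : (1 - Q) * (1 - Q) = 1 - Q - Q + Q * Q := by noncomm_ring
      rw [e, hQQ]
      abel
    have h3 := Matrix.posSemidef_conjTranspose_mul_self (1 - Q)
    rwa [h2] at h3
  have hGφi : G * φ⁻¹ = φ⁻¹ * G := by
    rw [← hGG]; simp only [Matrix.mul_assoc]
  have hGφ : G * φ = φ * G := by
    have e1 : φ * (G * φ⁻¹) * φ = φ * (φ⁻¹ * G) * φ := by rw [hGφi]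
    calc G * φ = (φ * φ⁻¹) * G * φ := by rw [hφφi, Matrix.one_mul]
      _ = φ * (φ⁻¹ * G) * φ := by simp only [Matrix.mul_assoc]
      _ = φ * (G * φ⁻¹) * φ := by rw [hGφi]
      _ = φ * G * (φ⁻¹ * φ) := by simp only [Matrix.mul_assoc]
      _ = φ * G := by rw [hφiφ, Matrix.mul_one]
  have hGφG1 : G * φ * G = 1 := by
    calc G * φ * G = G * (φ * G) := by rw [Matrix.mul_assoc]
      _ = G * (G * φ) := by rw [hGφ]
      _ = (G * G) * φ := by rw [Matrix.mul_assoc]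
      _ = 1 := by rw [hGG, hφiφ]
  have htr2 : (ω * Ap).trace = (Q * φ).trace := by
    have e1 : Q * φ = G * ((S * Ap * S) * (G * φ)) := by
      rw [hQd, hCstar, hCd]
      simp only [Matrix.mul_assoc]
    have e2 : (Q * φ).trace = ((S * Ap * S) * (G * φ) * G).trace := by
      rw [e1, Matrix.trace_mul_comm]
    have e3 : (S * Ap * S) * (G * φ) * G = (S * Ap * S) * (G * φ * G) := by
      simp only [Matrix.mul_assoc]
    have e4 : (ω * Ap).trace = (S * Ap * S).trace := by
      rw [← hSS, Matrix.trace_mul_comm, ← Matrix.mul_assoc, Matrix.trace_mul_cycle]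
    rw [e4, e2, e3, hGφG1, Matrix.mul_one]
  have hinvle : ∑ i, (lam i)⁻¹ * r i ≤ 1 := by
    have h0 : 0 ≤ ((1 - Q) * φ).trace := by
      set Hm := matSqrt φ with hHm
      have hHmH : Hm.IsHermitian := BSaux.matSqrt_herm hφ.posSemidef
      have hHH : Hm * Hm = φ := BSaux.matSqrt_mul_self hφ.posSemidef
      have e1 : ((1 - Q) * φ).trace = (Hm * (1 - Q) * Hm).trace := by
        rw [← hHH, Matrix.trace_mul_comm, Matrix.mul_assoc, Matrix.trace_mul_comm]
      rw [e1]
      refine BSaux.psd_trace_nonneg ?_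
      have := h1Q.conjTranspose_mul_mul_same (B := Hm)
      rwa [hHmH.eq] at this
    have h1 : ((1 - Q) * φ).trace = 1 - (ω * Ap).trace := by
      rw [Matrix.sub_mul, Matrix.one_mul, Matrix.trace_sub, hφtr, htr2]
    rw [h1] at h0
    have h2 : ((ω * Ap).trace).re ≤ 1 := by
      have := (Complex.nonneg_iff.mp h0).1
      simp only [Complex.sub_re, Complex.one_re] at this
      linarith
    have h3 : ((ω * Ap).trace).re = ∑ i, (lam i)⁻¹ * r i := by
      rw [htr, Complex.re_sum]
      congr 1
      funext i
      rw [hrw i, ← Complex.ofReal_mul]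
      exact Complex.ofReal_re _
    linarith [h3 ▸ h2]
  constructor
  · -- positivity
    rw [hRBS]
    have step : ∀ i, (1 - (lam i)⁻¹) * r i ≤ Real.log (lam i) * r i := by
      intro i
      rcases eq_or_lt_of_le (hrnn i) with h0 | hpos
      · rw [← h0]; simp
      · have hlam0 : 0 < lam i := by
          rcases (hApsd.eigenvalues_nonneg i).lt_or_eq with h | h
          · exact h
          · exact absurd (hker i h.symm) (ne_of_gt hpos)
        exact mul_le_mul_of_nonneg_right (Real.one_sub_inv_le_log_of_pos hlam0) (hrnn i)
    have hsle : ∑ i, (1 - (lam i)⁻¹) * r i ≤ ∑ i, Real.log (lam i) * r i :=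
      Finset.sum_le_sum (fun i _ => step i)
    have expand : ∑ i, (1 - (lam i)⁻¹) * r i = (∑ i, r i) - ∑ i, (lam i)⁻¹ * r i := by
      rw [← Finset.sum_sub_distrib]
      congr 1
      funext i
      ring
    rw [expand, hsum1] at hsle
    linarith
  · -- equality case
    intro h
    have hA1 : A = 1 := by
      rw [hAdef]
      have hSφ : S * φ = φ * S := by
        have : S * (S * S) = (S * S) * S := by simp only [Matrix.mul_assoc]
        rw [hSS] at this
        rw [← h, ← hSS]
        simp only [Matrix.mul_assoc]
      have hSφi : S * φ⁻¹ = φ⁻¹ * S := by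
        have e1 : φ⁻¹ * (S * φ) * φ⁻¹ = φ⁻¹ * (φ * S) * φ⁻¹ := by rw [hSφ]
        calc S * φ⁻¹ = (φ⁻¹ * φ) * S * φ⁻¹ := by rw [hφiφ, Matrix.one_mul]
          _ = φ⁻¹ * (φ * S) * φ⁻¹ := by simp only [Matrix.mul_assoc]
          _ = φ⁻¹ * (S * φ) * φ⁻¹ := by rw [hSφ]
          _ = φ⁻¹ * S * (φ * φ⁻¹) := by simp only [Matrix.mul_assoc]
          _ = φ⁻¹ * S := by rw [hφφi, Matrix.mul_one]
      calc S * φ⁻¹ * S = φ⁻¹ * S * S := by rw [hSφi]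
        _ = φ⁻¹ * (S * S) := by rw [Matrix.mul_assoc]
        _ = φ⁻¹ * φ := by rw [hSS, h]
        _ = 1 := hφiφ
    rw [RBS, harg, hA1, BSaux.matLog_one, Matrix.mul_zero, Matrix.trace_zero]
    simp

end
end

section
/- Let ω = ⊕_i p(i) ω_i be a block-diagonal density matrix on ⊕_i (ℂ^{n_i} ⊗ ℂ^{n_i}) where ω_i = |σ_i^{1/2}⟩⟨σ_i^{1/2}| is the rank-one projector onto the vectorization of σ_i^{1/2}, σ_i a density matrix on ℂ^{n_i}, and p a probability distribution. Then the entangled entropy E = Tr ω log( ω^{1/2} (ρ ⊗ I)⁻ ω^{1/2} ) with ρ = ⊕_i p(i)σ_i satisfies E = Σ_i p(i) log(rank σ_i). -/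
open Matrix Kronecker
open scoped ComplexOrder

noncomputable section
open Classical

namespace StmtAux
open Polynomial

variable {d : Type*} [Fintype d] [DecidableEq d] {A : Matrix d d ℂ}

lemma diagonal_congr {v w : d → ℂ} (h : ∀ i, v i = w i) : diagonal v = diagonal w := by
  ext i j
  by_cases hij : i = j <;> simp [Matrix.diagonal_apply, hij, h j]

lemma cfc_congr' (hA : A.IsHermitian) {f g : ℝ → ℝ}
    (h : ∀ i, f (hA.eigenvalues i) = g (hA.eigenvalues i)) : hA.cfc f = hA.cfc g := by
  unfold Matrix.IsHermitian.cfc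
  have : RCLike.ofReal ∘ f ∘ hA.eigenvalues = (RCLike.ofReal ∘ g ∘ hA.eigenvalues : d → ℂ) := by
    funext i; simp [h i]
  rw [this]

lemma cfc_smul' (hA : A.IsHermitian) (c : ℝ) (f : ℝ → ℝ) :
    hA.cfc (fun x => c * f x) = (c : ℂ) • hA.cfc f := by
  unfold Matrix.IsHermitian.cfc
  simp only [Unitary.conjStarAlgAut_apply]
  have : diagonal (RCLike.ofReal ∘ (fun x => c * f x) ∘ hA.eigenvalues)
      = (c : ℂ) • diagonal (RCLike.ofReal ∘ f ∘ hA.eigenvalues : d → ℂ) := by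
    ext i j
    by_cases hij : i = j <;> simp [Matrix.diagonal_apply, hij, Matrix.smul_apply]
  rw [this, mul_smul_comm, smul_mul_assoc]

lemma cfc_mul' (hA : A.IsHermitian) (f g : ℝ → ℝ) :
    hA.cfc f * hA.cfc g = hA.cfc (fun x => f x * g x) := by
  unfold Matrix.IsHermitian.cfc
  simp only [Unitary.conjStarAlgAut_apply]
  have h1 : (star (hA.eigenvectorUnitary : Matrix d d ℂ)) * (hA.eigenvectorUnitary : Matrix d d ℂ) = 1 :=
    Unitary.star_mul_self_of_mem (SetLike.coe_mem _)
  calc _ = (hA.eigenvectorUnitary : Matrix d d ℂ) * (diagonal (RCLike.ofReal ∘ f ∘ hA.eigenvalues) *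
        ((star (hA.eigenvectorUnitary : Matrix d d ℂ)) * (hA.eigenvectorUnitary : Matrix d d ℂ)) *
        diagonal (RCLike.ofReal ∘ g ∘ hA.eigenvalues)) * star (hA.eigenvectorUnitary : Matrix d d ℂ) := by
        simp only [mul_assoc]
    _ = _ := by
        rw [h1, mul_one, diagonal_mul_diagonal]
        have : (fun i => (RCLike.ofReal ∘ f ∘ hA.eigenvalues) i * (RCLike.ofReal ∘ g ∘ hA.eigenvalues) i)
            = (RCLike.ofReal ∘ (fun x => f x * g x) ∘ hA.eigenvalues : d → ℂ) := by
          funext i; simp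
        rw [this]

lemma cfc_id' (hA : A.IsHermitian) : hA.cfc (fun x => x) = A := by
  unfold Matrix.IsHermitian.cfc
  exact hA.spectral_theorem.symm

lemma cfc_trace' (hA : A.IsHermitian) (f : ℝ → ℝ) :
    (hA.cfc f).trace = ∑ i, ((f (hA.eigenvalues i) : ℝ) : ℂ) := by
  unfold Matrix.IsHermitian.cfc
  simp only [Unitary.conjStarAlgAut_apply]
  rw [Matrix.trace_mul_cycle]
  rw [Unitary.star_mul_self_of_mem (SetLike.coe_mem _), one_mul, trace_diagonal]
  simp [Function.comp]

lemma cfc_eq_zero_imp (hA : A.IsHermitian) {f : ℝ → ℝ} (h : hA.cfc f = 0) :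
    ∀ i, f (hA.eigenvalues i) = 0 := by
  intro i
  unfold Matrix.IsHermitian.cfc at h
  simp only [Unitary.conjStarAlgAut_apply] at h
  have h1 : (star (hA.eigenvectorUnitary : Matrix d d ℂ)) * (hA.eigenvectorUnitary : Matrix d d ℂ) = 1 :=
    Unitary.star_mul_self_of_mem (SetLike.coe_mem _)
  have h2 : (hA.eigenvectorUnitary : Matrix d d ℂ) * (star (hA.eigenvectorUnitary : Matrix d d ℂ)) = 1 :=
    Unitary.mul_star_self_of_mem (SetLike.coe_mem _)
  have h4 : (star (hA.eigenvectorUnitary : Matrix d d ℂ)) *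
        ((hA.eigenvectorUnitary : Matrix d d ℂ) * diagonal (RCLike.ofReal ∘ f ∘ hA.eigenvalues)
          * star (hA.eigenvectorUnitary : Matrix d d ℂ)) * (hA.eigenvectorUnitary : Matrix d d ℂ)
      = diagonal (RCLike.ofReal ∘ f ∘ hA.eigenvalues) := by
    rw [show (star (hA.eigenvectorUnitary : Matrix d d ℂ)) *
        ((hA.eigenvectorUnitary : Matrix d d ℂ) * diagonal (RCLike.ofReal ∘ f ∘ hA.eigenvalues)
          * star (hA.eigenvectorUnitary : Matrix d d ℂ)) * (hA.eigenvectorUnitary : Matrix d d ℂ)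
        = ((star (hA.eigenvectorUnitary : Matrix d d ℂ)) * (hA.eigenvectorUnitary : Matrix d d ℂ)) *
          diagonal (RCLike.ofReal ∘ f ∘ hA.eigenvalues) *
          ((star (hA.eigenvectorUnitary : Matrix d d ℂ)) * (hA.eigenvectorUnitary : Matrix d d ℂ))
      from by simp only [mul_assoc], h1, one_mul, mul_one]
  have h3 : diagonal (RCLike.ofReal ∘ f ∘ hA.eigenvalues) = (0 : Matrix d d ℂ) := by
    rw [← h4, h, mul_zero, zero_mul]
  have := congrFun (congrFun h3 i) i
  simpa using this


lemma aeval_conj (U B : Matrix d d ℂ) (hU1 : star U * U = 1) (hU2 : U * star U = 1) (P : ℂ[X]) :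
    aeval (U * B * star U) P = U * aeval B P * star U := by
  induction P using Polynomial.induction_on' with
  | add p q hp hq => rw [map_add, map_add, hp, hq, mul_add, add_mul]
  | monomial n a =>
    have hpow : ∀ k : ℕ, (U * B * star U) ^ k = U * B ^ k * star U := by
      intro k
      induction k with
      | zero => simp [hU2]
      | succ k ih =>
        rw [pow_succ, ih, pow_succ]
        calc U * B ^ k * star U * (U * B * star U)
            = U * B ^ k * (star U * U) * B * star U := by simp only [mul_assoc]
          _ = U * (B ^ k * B) * star U := by rw [hU1, mul_one]; simp only [mul_assoc]
    rw [aeval_monomial, aeval_monomial, hpow, ← Algebra.smul_def, ← Algebra.smul_def,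
      ← smul_mul_assoc, ← mul_smul_comm]

lemma aeval_diagonal (v : d → ℂ) (P : ℂ[X]) :
    aeval (diagonal v) P = diagonal (fun i => P.eval (v i)) := by
  induction P using Polynomial.induction_on' with
  | add p q hp hq =>
    rw [map_add, hp, hq, diagonal_add]
    exact diagonal_congr fun i => by simp
  | monomial n a =>
    rw [aeval_monomial, diagonal_pow, algebraMap_eq_diagonal, diagonal_mul_diagonal]
    exact diagonal_congr fun i => by simp

lemma eval_map_ofReal (q : ℝ[X]) (x : ℝ) :
    (q.map (algebraMap ℝ ℂ)).eval ((x : ℂ)) = ((q.eval x : ℝ) : ℂ) := by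
  rw [Polynomial.eval_map, show ((x : ℝ) : ℂ) = algebraMap ℝ ℂ x from rfl,
    Polynomial.eval₂_at_apply]
  rfl

lemma aeval_smul_eq_cfc (hA : A.IsHermitian) (c : ℝ) (q : ℝ[X]) :
    aeval ((c : ℂ) • A) (q.map (algebraMap ℝ ℂ)) = hA.cfc (fun x => q.eval (c * x)) := by
  have hU1 : star (hA.eigenvectorUnitary : Matrix d d ℂ) * (hA.eigenvectorUnitary : Matrix d d ℂ) = 1 :=
    Unitary.star_mul_self_of_mem (SetLike.coe_mem _)
  have hU2 : (hA.eigenvectorUnitary : Matrix d d ℂ) * star (hA.eigenvectorUnitary : Matrix d d ℂ) = 1 :=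
    Unitary.mul_star_self_of_mem (SetLike.coe_mem _)
  have hsp : (c : ℂ) • A = (hA.eigenvectorUnitary : Matrix d d ℂ) *
      diagonal (fun i => ((c * hA.eigenvalues i : ℝ) : ℂ)) *
      star (hA.eigenvectorUnitary : Matrix d d ℂ) := by
    conv_lhs => rw [hA.spectral_theorem, Unitary.conjStarAlgAut_apply]
    rw [← smul_mul_assoc, ← mul_smul_comm]
    congr 2
    ext i j
    by_cases hij : i = j <;> simp [Matrix.diagonal_apply, hij, Matrix.smul_apply]
  rw [hsp, aeval_conj _ _ hU1 hU2, aeval_diagonal]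
  unfold Matrix.IsHermitian.cfc
  simp only [Unitary.conjStarAlgAut_apply]
  congr 2
  exact diagonal_congr fun i => by rw [eval_map_ofReal]; rfl

lemma matCFC_eq_aeval {f : ℝ → ℝ} (hA : A.IsHermitian) (q : ℝ[X])
    (h : ∀ i, q.eval (hA.eigenvalues i) = f (hA.eigenvalues i)) :
    matCFC f A = aeval A (q.map (algebraMap ℝ ℂ)) := by
  rw [matCFC, dif_pos hA]
  have h2 := aeval_smul_eq_cfc hA 1 q
  rw [Complex.ofReal_one, one_smul] at h2
  rw [h2]
  exact cfc_congr' hA (fun i => by rw [one_mul, h i])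

lemma eig_root (hA : A.IsHermitian) (q : ℝ[X])
    (h : aeval A (q.map (algebraMap ℝ ℂ)) = 0) :
    ∀ i, q.eval (hA.eigenvalues i) = 0 := by
  have h2 := aeval_smul_eq_cfc hA 1 q
  rw [Complex.ofReal_one, one_smul, h] at h2
  intro i
  have := cfc_eq_zero_imp hA h2.symm i
  simpa using this

lemma exists_interp (T : Finset ℝ) (f : ℝ → ℝ) :
    ∃ q : ℝ[X], ∀ x ∈ T, q.eval x = f x := by
  refine ⟨Lagrange.interpolate T id f, fun x hx => ?_⟩
  simpa using Lagrange.eval_interpolate_at_node f (Set.injOn_id _) hx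


section Structural

lemma matCFC_of_eq {f : ℝ → ℝ} (hA : A.IsHermitian) : matCFC f A = hA.cfc f := dif_pos hA

lemma isHermitian_smul_real (hA : A.IsHermitian) (c : ℝ) : ((c : ℂ) • A).IsHermitian := by
  unfold Matrix.IsHermitian at *
  rw [conjTranspose_smul, hA]
  congr 1
  simp

lemma matCFC_smul (f : ℝ → ℝ) (c : ℝ) (hA : A.IsHermitian) :
    matCFC f ((c : ℂ) • A) = hA.cfc (fun x => f (c * x)) := by
  have hcA := isHermitian_smul_real hA c
  obtain ⟨q, hq⟩ := exists_interp
    (Finset.image hcA.eigenvalues Finset.univ ∪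
      Finset.image (fun i => c * hA.eigenvalues i) Finset.univ) f
  rw [matCFC_eq_aeval hcA q
    (fun j => hq _ (Finset.mem_union_left _ (Finset.mem_image_of_mem _ (Finset.mem_univ j)))),
    aeval_smul_eq_cfc hA c q]
  exact cfc_congr' hA fun i =>
    hq _ (Finset.mem_union_right _ (Finset.mem_image_of_mem _ (Finset.mem_univ i)))

lemma matCFC_zero {f : ℝ → ℝ} (hf : f 0 = 0) : matCFC f (0 : Matrix d d ℂ) = 0 := by
  have h0 : (0 : Matrix d d ℂ).IsHermitian := isHermitian_zero
  have heig : ∀ i, h0.eigenvalues i = 0 := by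
    intro i
    have := eig_root h0 Polynomial.X (by simp) i
    simpa using this
  rw [matCFC_of_eq h0, cfc_congr' h0 (g := fun _ => (0:ℝ)) (fun i => by rw [heig i, hf])]
  unfold Matrix.IsHermitian.cfc
  simp only [Unitary.conjStarAlgAut_apply]
  have : RCLike.ofReal ∘ (fun _ : ℝ => (0:ℝ)) ∘ h0.eigenvalues = (fun _ => 0 : d → ℂ) := by
    funext i; simp
  rw [this, show (diagonal (fun _ => 0 : d → ℂ)) = 0 from diagonal_zero, mul_zero, zero_mul]

section Kron
variable {e : Type*} [Fintype e] [DecidableEq e]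

lemma kroneckerOne_isHermitian (hA : A.IsHermitian) :
    (A ⊗ₖ (1 : Matrix e e ℂ)).IsHermitian := by
  show _ᴴ = _
  ext ⟨i1, i2⟩ ⟨j1, j2⟩
  have hAe : star (A j1 i1) = A i1 j1 := congrFun (congrFun hA i1) j1
  by_cases h : i2 = j2 <;>
    simp [Matrix.conjTranspose_apply, Matrix.kroneckerMap_apply, Matrix.one_apply, h,
      star_mul', hAe, Ne.symm, eq_comm]

lemma kroneckerOne_pow (A : Matrix d d ℂ) (k : ℕ) :
    (A ⊗ₖ (1 : Matrix e e ℂ)) ^ k = (A ^ k) ⊗ₖ 1 := by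
  induction k with
  | zero => rw [pow_zero, pow_zero, one_kronecker_one]
  | succ k ih => rw [pow_succ, ih, ← mul_kronecker_mul, one_mul, pow_succ]

lemma aeval_kroneckerOne (A : Matrix d d ℂ) (P : ℂ[X]) :
    aeval (A ⊗ₖ (1 : Matrix e e ℂ)) P = (aeval A P) ⊗ₖ 1 := by
  induction P using Polynomial.induction_on' with
  | add p q hp hq => rw [map_add, hp, hq, map_add, ← add_kronecker]
  | monomial n a =>
    rw [aeval_monomial, aeval_monomial, kroneckerOne_pow, ← Algebra.smul_def, ← Algebra.smul_def,
      smul_kronecker]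

lemma matCFC_kroneckerOne (f : ℝ → ℝ) (hA : A.IsHermitian) :
    matCFC f (A ⊗ₖ (1 : Matrix e e ℂ)) = (matCFC f A) ⊗ₖ 1 := by
  have hAk := kroneckerOne_isHermitian (e := e) hA
  obtain ⟨q, hq⟩ := exists_interp
    (Finset.image hAk.eigenvalues Finset.univ ∪ Finset.image hA.eigenvalues Finset.univ) f
  rw [matCFC_eq_aeval hAk q
    (fun j => hq _ (Finset.mem_union_left _ (Finset.mem_image_of_mem _ (Finset.mem_univ j)))),
    aeval_kroneckerOne,
    matCFC_eq_aeval hA q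
    (fun j => hq _ (Finset.mem_union_right _ (Finset.mem_image_of_mem _ (Finset.mem_univ j))))]

end Kron

section Block
variable {κ : Type*} [Fintype κ] [DecidableEq κ] {m : κ → Type*}
  [∀ i, Fintype (m i)] [∀ i, DecidableEq (m i)]

lemma blockDiagonal'_isHermitian {M : ∀ i, Matrix (m i) (m i) ℂ}
    (hM : ∀ i, (M i).IsHermitian) : (blockDiagonal' M).IsHermitian := by
  show _ᴴ = _
  rw [blockDiagonal'_conjTranspose]
  exact congrArg _ (funext fun i => hM i)

lemma aeval_blockDiagonal' (M : ∀ i, Matrix (m i) (m i) ℂ) (P : ℂ[X]) :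
    aeval (blockDiagonal' M) P = blockDiagonal' (fun i => aeval (M i) P) := by
  induction P using Polynomial.induction_on' with
  | add p q hp hq =>
    rw [map_add, hp, hq, ← blockDiagonal'_add]
    exact congrArg _ (funext fun i => (map_add _ _ _).symm)
  | monomial n a =>
    rw [aeval_monomial, ← blockDiagonal'_pow, ← Algebra.smul_def, ← blockDiagonal'_smul]
    exact congrArg _ (funext fun i => by
      rw [Pi.smul_apply, Pi.pow_apply, Algebra.smul_def, aeval_monomial])

lemma matCFC_blockDiagonal' (f : ℝ → ℝ) (M : ∀ i, Matrix (m i) (m i) ℂ)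
    (hM : ∀ i, (M i).IsHermitian) :
    matCFC f (blockDiagonal' M) = blockDiagonal' (fun i => matCFC f (M i)) := by
  have hBD := blockDiagonal'_isHermitian hM
  obtain ⟨q, hq⟩ := exists_interp
    (Finset.image hBD.eigenvalues Finset.univ ∪
      Finset.univ.biUnion (fun i => Finset.image (hM i).eigenvalues Finset.univ)) f
  rw [matCFC_eq_aeval hBD q
    (fun j => hq _ (Finset.mem_union_left _ (Finset.mem_image_of_mem _ (Finset.mem_univ j)))),
    aeval_blockDiagonal']
  exact congrArg _ (funext fun i => (matCFC_eq_aeval (hM i) q (fun j => hq _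
    (Finset.mem_union_right _ (Finset.mem_biUnion.mpr ⟨i, Finset.mem_univ i,
      Finset.mem_image_of_mem _ (Finset.mem_univ j)⟩)))).symm)

end Block
end Structural


section Vec
variable {δ : Type*} [Fintype δ] [DecidableEq δ]

/-- vectorization of a matrix as a column. -/
def W (B : Matrix δ δ ℂ) : Matrix (δ × δ) Unit ℂ := of fun ab _ => B ab.1 ab.2

lemma kron_mul_W (P B : Matrix δ δ ℂ) :
    (P ⊗ₖ (1 : Matrix δ δ ℂ)) * W B = W (P * B) := by
  ext ⟨a, b⟩ u
  simp only [Matrix.mul_apply, W, of_apply, kroneckerMap_apply, Fintype.sum_prod_type,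
    Matrix.one_apply, mul_ite, mul_one, mul_zero, ite_mul, zero_mul]
  simp [Finset.sum_ite_eq' , Matrix.mul_apply]

lemma Wconj_mul_W (B C : Matrix δ δ ℂ) :
    (W B)ᴴ * W C = ((Bᴴ * C).trace) • (1 : Matrix Unit Unit ℂ) := by
  ext u v
  simp only [Matrix.mul_apply, conjTranspose_apply, W, of_apply, Fintype.sum_prod_type,
    Matrix.trace, Matrix.diag, Matrix.smul_apply, Matrix.one_apply, smul_eq_mul]
  rw [Finset.sum_comm]
  simp [Matrix.mul_apply, Subsingleton.elim u v]

lemma trace_W_outer (B : Matrix δ δ ℂ) :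
    (W B * (W B)ᴴ).trace = (Bᴴ * B).trace := by
  rw [Matrix.trace_mul_comm, Wconj_mul_W, Matrix.trace_smul]
  simp

end Vec


section Blk
variable {δ : Type*} [Fintype δ] [DecidableEq δ] {σ : Matrix δ δ ℂ}

lemma matSqrt_psd (hσ : σ.PosSemidef) : matSqrt σ = hσ.1.cfc Real.sqrt := by
  rw [matSqrt, dif_pos hσ]; rfl

lemma matSqrt_herm (hσ : σ.PosSemidef) : (matSqrt σ).IsHermitian := by
  rw [matSqrt_psd hσ]
  unfold Matrix.IsHermitian.cfc
  simp only [Unitary.conjStarAlgAut_apply]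
  exact isHermitian_mul_mul_conjTranspose _
    (isHermitian_diagonal_of_self_adjoint _ (by show star _ = _; funext i; simp))

lemma matSqrt_mul_self (hσ : σ.PosSemidef) : matSqrt σ * matSqrt σ = σ := by
  rw [matSqrt_psd hσ, cfc_mul', cfc_congr' hσ.1 (g := fun x => x)
    (fun i => Real.mul_self_sqrt (hσ.eigenvalues_nonneg i)), cfc_id']

/-- the rank-one projector `|σ^{1/2}⟩⟨σ^{1/2}|`. -/
def Vmat (σ : Matrix δ δ ℂ) : Matrix (δ × δ) (δ × δ) ℂ :=
  W (matSqrt σ) * (W (matSqrt σ))ᴴ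

lemma Vmat_herm : (Vmat σ).IsHermitian := (posSemidef_self_mul_conjTranspose _).1

lemma Wconj_mul_W_self (hσ : σ.PosSemidef) (htr : σ.trace = 1) :
    (W (matSqrt σ))ᴴ * W (matSqrt σ) = 1 := by
  rw [Wconj_mul_W, show (matSqrt σ)ᴴ = matSqrt σ from matSqrt_herm hσ, matSqrt_mul_self hσ,
    htr, one_smul]

lemma Vmat_mul_Vmat (hσ : σ.PosSemidef) (htr : σ.trace = 1) :
    Vmat σ * Vmat σ = Vmat σ := by
  unfold Vmat
  calc (W (matSqrt σ) * (W (matSqrt σ))ᴴ) * (W (matSqrt σ) * (W (matSqrt σ))ᴴ)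
      = W (matSqrt σ) * (((W (matSqrt σ))ᴴ * W (matSqrt σ)) * (W (matSqrt σ))ᴴ) := by
        simp only [Matrix.mul_assoc]
    _ = _ := by rw [Wconj_mul_W_self hσ htr, Matrix.one_mul]

lemma trace_Vmat (hσ : σ.PosSemidef) (htr : σ.trace = 1) : (Vmat σ).trace = 1 := by
  unfold Vmat
  rw [trace_W_outer, show (matSqrt σ)ᴴ = matSqrt σ from matSqrt_herm hσ,
    matSqrt_mul_self hσ, htr]

lemma Vmat_kron_Vmat (hσ : σ.PosSemidef) (P : Matrix δ δ ℂ) :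
    Vmat σ * (P ⊗ₖ (1 : Matrix δ δ ℂ)) * Vmat σ = ((P * σ).trace) • Vmat σ := by
  unfold Vmat
  have h1 : (W (matSqrt σ))ᴴ * ((P ⊗ₖ (1 : Matrix δ δ ℂ)) * W (matSqrt σ))
      = ((P * σ).trace) • (1 : Matrix Unit Unit ℂ) := by
    rw [kron_mul_W, Wconj_mul_W, show (matSqrt σ)ᴴ = matSqrt σ from matSqrt_herm hσ,
      Matrix.trace_mul_comm, mul_assoc, matSqrt_mul_self hσ]
  calc (W (matSqrt σ) * (W (matSqrt σ))ᴴ) * (P ⊗ₖ (1 : Matrix δ δ ℂ)) *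
        (W (matSqrt σ) * (W (matSqrt σ))ᴴ)
      = W (matSqrt σ) * ((W (matSqrt σ))ᴴ * ((P ⊗ₖ (1 : Matrix δ δ ℂ)) * W (matSqrt σ))) *
        (W (matSqrt σ))ᴴ := by simp only [Matrix.mul_assoc]
    _ = W (matSqrt σ) * (((P * σ).trace) • (1 : Matrix Unit Unit ℂ)) * (W (matSqrt σ))ᴴ := by
        rw [h1]
    _ = _ := by rw [Matrix.mul_smul, Matrix.mul_one, Matrix.smul_mul]

lemma cfc_mul_self (hA : A.IsHermitian) (f : ℝ → ℝ) :
    hA.cfc f * A = hA.cfc (fun x => f x * x) := by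
  calc hA.cfc f * A = hA.cfc f * hA.cfc (fun x => x) := by rw [cfc_id' hA]
    _ = _ := cfc_mul' hA _ _

lemma trace_matPinv_mul (hσ : σ.PosSemidef) : (matPinv σ * σ).trace = (σ.rank : ℂ) := by
  rw [matPinv, matCFC_of_eq hσ.1, cfc_mul_self hσ.1, cfc_trace',
    hσ.1.rank_eq_card_non_zero_eigs, Fintype.card_subtype]
  rw [← Finset.sum_boole (p := fun i => hσ.1.eigenvalues i ≠ 0) (s := Finset.univ)]
  refine Finset.sum_congr rfl fun i _ => ?_
  by_cases h : hσ.1.eigenvalues i = 0 <;> simp [h, inv_mul_cancel₀]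

lemma trace_eq_sum_eigs (hσ : σ.IsHermitian) :
    σ.trace = ∑ i, ((hσ.eigenvalues i : ℝ) : ℂ) := by
  rw [show σ.trace = (hσ.cfc (fun x => x)).trace from by rw [cfc_id'], cfc_trace']

lemma rank_ne_zero_of_trace_one (hσ : σ.PosSemidef) (htr : σ.trace = 1) :
    ((σ.rank : ℝ)) ≠ 0 := by
  rw [Nat.cast_ne_zero]
  intro h
  rw [hσ.1.rank_eq_card_non_zero_eigs] at h
  have hall : ∀ i, hσ.1.eigenvalues i = 0 := by
    intro i
    by_contra hne
    exact (Fintype.card_pos_iff.mpr ⟨⟨i, hne⟩⟩).ne' h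
  have := trace_eq_sum_eigs hσ.1
  rw [htr] at this
  simp only [hall, Complex.ofReal_zero, Finset.sum_const_zero] at this
  exact one_ne_zero this

lemma matLog_smul_Vmat (hσ : σ.PosSemidef) (htr : σ.trace = 1) (r : ℝ) (hr : r ≠ 0) :
    matLog ((r : ℂ) • Vmat σ) = ((Real.log r : ℝ) : ℂ) • Vmat σ := by
  have hV : (Vmat σ).IsHermitian := Vmat_herm
  have hrV := isHermitian_smul_real hV r
  have hz : aeval ((r : ℂ) • Vmat σ) ((X * X - Polynomial.C r * X).map (algebraMap ℝ ℂ)) = 0 := by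
    have hMM : ((r : ℂ) • Vmat σ) * ((r : ℂ) • Vmat σ) = ((r : ℂ) * (r : ℂ)) • Vmat σ := by
      rw [smul_mul_smul_comm, Vmat_mul_Vmat hσ htr]
    have hmap : (X * X - Polynomial.C r * X).map (algebraMap ℝ ℂ)
        = X * X - Polynomial.C ((r : ℝ) : ℂ) * X := by
      simp
    rw [hmap, _root_.map_sub, _root_.map_mul, _root_.map_mul, aeval_X, aeval_C, hMM,
      ← Algebra.smul_def, smul_smul]
    exact sub_self _
  have heig : ∀ i, hrV.eigenvalues i = 0 ∨ hrV.eigenvalues i = r := by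
    intro i
    have h := eig_root hrV _ hz i
    simp only [eval_sub, eval_mul, eval_X, eval_C] at h
    have h2 : hrV.eigenvalues i * (hrV.eigenvalues i - r) = 0 := by ring_nf; ring_nf at h; linarith
    rcases mul_eq_zero.mp h2 with h' | h'
    · exact Or.inl h'
    · exact Or.inr (by linarith)
  have hfg : ∀ i, Real.log (hrV.eigenvalues i) = (Real.log r / r) * hrV.eigenvalues i := by
    intro i
    rcases heig i with h | h
    · simp [h]
    · rw [h, div_mul_cancel₀ _ hr]
  rw [matLog, matCFC_of_eq hrV, cfc_congr' hrV (g := fun x => (Real.log r / r) * x) hfg,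
    cfc_smul', cfc_id', smul_smul]
  congr 1
  rw [← Complex.ofReal_mul]
  congr 1
  field_simp

end Blk


section Blk2
variable {δ : Type*} [Fintype δ] [DecidableEq δ] {σ : Matrix δ δ ℂ}

lemma matLog_smul_Vmat' (hσ : σ.PosSemidef) (htr : σ.trace = 1) (r : ℝ) :
    matLog ((r : ℂ) • Vmat σ) = ((Real.log r : ℝ) : ℂ) • Vmat σ := by
  by_cases hr : r = 0
  · subst hr
    simp only [Complex.ofReal_zero, zero_smul, Real.log_zero]
    exact matCFC_zero Real.log_zero
  · exact matLog_smul_Vmat hσ htr r hr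

lemma matCFC_smul_Vmat (hσ : σ.PosSemidef) (htr : σ.trace = 1) (f : ℝ → ℝ) (hf0 : f 0 = 0)
    (r : ℝ) : matCFC f ((r : ℂ) • Vmat σ) = ((f r : ℝ) : ℂ) • Vmat σ := by
  by_cases hr : r = 0
  · subst hr
    simp only [Complex.ofReal_zero, zero_smul, hf0]
    exact matCFC_zero hf0
  have hV : (Vmat σ).IsHermitian := Vmat_herm
  have hrV := isHermitian_smul_real hV r
  have hz : aeval ((r : ℂ) • Vmat σ) ((X * X - Polynomial.C r * X).map (algebraMap ℝ ℂ)) = 0 := by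
    have hMM : ((r : ℂ) • Vmat σ) * ((r : ℂ) • Vmat σ) = ((r : ℂ) * (r : ℂ)) • Vmat σ := by
      rw [smul_mul_smul_comm, Vmat_mul_Vmat hσ htr]
    have hmap : (X * X - Polynomial.C r * X).map (algebraMap ℝ ℂ)
        = X * X - Polynomial.C ((r : ℝ) : ℂ) * X := by
      simp
    rw [hmap, _root_.map_sub, _root_.map_mul, _root_.map_mul, aeval_X, aeval_C, hMM,
      ← Algebra.smul_def, smul_smul]
    exact sub_self _
  have heig : ∀ i, hrV.eigenvalues i = 0 ∨ hrV.eigenvalues i = r := by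
    intro i
    have h := eig_root hrV _ hz i
    simp only [eval_sub, eval_mul, eval_X, eval_C] at h
    have h2 : hrV.eigenvalues i * (hrV.eigenvalues i - r) = 0 := by ring_nf; ring_nf at h; linarith
    rcases mul_eq_zero.mp h2 with h' | h'
    · exact Or.inl h'
    · exact Or.inr (by linarith)
  have hfg : ∀ i, f (hrV.eigenvalues i) = (f r / r) * hrV.eigenvalues i := by
    intro i
    rcases heig i with h | h
    · simp [h, hf0]
    · rw [h, div_mul_cancel₀ _ hr]
  rw [matCFC_of_eq hrV, cfc_congr' hrV (g := fun x => (f r / r) * x) hfg,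
    cfc_smul', cfc_id', smul_smul]
  congr 1
  rw [← Complex.ofReal_mul]
  congr 1
  field_simp

lemma matPinv_block (hσ : σ.PosSemidef) {q : ℝ} (hq : q ≠ 0) :
    matPinv ((q : ℂ) • (σ ⊗ₖ (1 : Matrix δ δ ℂ)))
      = ((q⁻¹ : ℝ) : ℂ) • ((matPinv σ) ⊗ₖ (1 : Matrix δ δ ℂ)) := by
  have hk := kroneckerOne_isHermitian (e := δ) hσ.1
  rw [matPinv, matCFC_smul _ q hk]
  have h1 : (fun x : ℝ => (q * x)⁻¹) = fun x : ℝ => q⁻¹ * x⁻¹ := by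
    funext x; rw [mul_inv]
  rw [h1, cfc_smul' hk q⁻¹ (·⁻¹), ← matCFC_of_eq hk, matCFC_kroneckerOne _ hσ.1]
  rfl

lemma mid_block (hσ : σ.PosSemidef) (htr : σ.trace = 1) {q : ℝ} (hq0 : 0 ≤ q) :
    ((Real.sqrt q : ℂ) • Vmat σ) * matPinv ((q : ℂ) • (σ ⊗ₖ (1 : Matrix δ δ ℂ))) *
      ((Real.sqrt q : ℂ) • Vmat σ)
      = (((if q = 0 then (0 : ℝ) else ((σ.rank : ℝ))) : ℝ) : ℂ) • Vmat σ := by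
  by_cases hq : q = 0
  · subst hq
    rw [if_pos rfl]
    simp only [Real.sqrt_zero, Complex.ofReal_zero, zero_smul]
    rw [Matrix.zero_mul, Matrix.zero_mul]
  · rw [matPinv_block hσ hq, if_neg hq]
    rw [Matrix.smul_mul, Matrix.mul_smul, Matrix.mul_smul, Matrix.smul_mul, Matrix.smul_mul,
      Vmat_kron_Vmat hσ, trace_matPinv_mul hσ, smul_smul, smul_smul, smul_smul]
    congr 1
    rw [show ((σ.rank : ℝ) : ℂ) = (σ.rank : ℂ) by push_cast; ring]
    rw [← Complex.ofReal_mul, ← Complex.ofReal_mul]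
    rw [Real.mul_self_sqrt hq0, mul_inv_cancel₀ hq]
    simp

end Blk2

section Outer
variable {a : Type*} [Fintype a]

lemma smul_outer (c : ℝ) (hc : 0 ≤ c) (u : Matrix a Unit ℂ) :
    (c : ℂ) • (u * uᴴ) = ((Real.sqrt c : ℂ) • u) * (((Real.sqrt c : ℂ) • u)ᴴ) := by
  rw [conjTranspose_smul, Matrix.mul_smul, Matrix.smul_mul, smul_smul]
  congr 1
  rw [Complex.star_def, Complex.conj_ofReal, ← Complex.ofReal_mul, Real.mul_self_sqrt hc]

end Outer

lemma posSemidef_BD_outer {κ : Type*} [Fintype κ] [DecidableEq κ] {m : κ → Type*}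
    [∀ i, Fintype (m i)] [∀ i, DecidableEq (m i)] (u : ∀ i, Matrix (m i) Unit ℂ) :
    (blockDiagonal' fun i => u i * (u i)ᴴ).PosSemidef := by
  have h : blockDiagonal' (fun i => u i * (u i)ᴴ)
      = blockDiagonal' u * (blockDiagonal' u)ᴴ := by
    rw [blockDiagonal'_conjTranspose, blockDiagonal'_mul]
  rw [h]
  exact posSemidef_self_mul_conjTranspose _

end StmtAux

open StmtAux

theorem stmt9 {ι : Type*} [Fintype ι] [DecidableEq ι] (n : ι → ℕ)
    (p : ι → ℝ) (hp : ∀ i, 0 ≤ p i) (hp1 : ∑ i, p i = 1)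
    (σ : ∀ i, Matrix (Fin (n i)) (Fin (n i)) ℂ)
    (hσ : ∀ i, (σ i).PosSemidef) (hσtr : ∀ i, (σ i).trace = 1) :
    RBS
      (Matrix.blockDiagonal' fun i =>
        Matrix.of fun ab cd : Fin (n i) × Fin (n i) =>
          (p i : ℂ) * (matSqrt (σ i) ab.1 ab.2 * star (matSqrt (σ i) cd.1 cd.2)))
      (Matrix.blockDiagonal' fun i =>
        (p i : ℂ) • (σ i ⊗ₖ (1 : Matrix (Fin (n i)) (Fin (n i)) ℂ))) =
    ∑ i, p i * Real.log ((σ i).rank) := by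
  classical
  -- the rescaled rank, 0 on zero-probability blocks
  set rr : ι → ℝ := fun i => if p i = 0 then 0 else ((σ i).rank : ℝ) with hrr
  -- rewrite ω blockwise in terms of Vmat
  have eω : (Matrix.blockDiagonal' fun i =>
        Matrix.of fun ab cd : Fin (n i) × Fin (n i) =>
          (p i : ℂ) * (matSqrt (σ i) ab.1 ab.2 * star (matSqrt (σ i) cd.1 cd.2)))
      = Matrix.blockDiagonal' (fun i => (p i : ℂ) • Vmat (σ i)) := by
    refine congrArg _ (funext fun i => ?_)
    ext ⟨a, b⟩ ⟨c, e⟩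
    simp [Vmat, W, Matrix.mul_apply, Matrix.conjTranspose_apply]
  rw [eω]
  -- positive semidefiniteness of ω
  have hωpsd : (Matrix.blockDiagonal' (fun i => (p i : ℂ) • Vmat (σ i))).PosSemidef := by
    rw [show (fun i => (p i : ℂ) • Vmat (σ i))
        = fun i => ((Real.sqrt (p i) : ℂ) • W (matSqrt (σ i))) *
            (((Real.sqrt (p i) : ℂ) • W (matSqrt (σ i)))ᴴ)
      from funext fun i => smul_outer (p i) (hp i) _]
    exact posSemidef_BD_outer _
  -- the candidate square root
  have hCpsd : (Matrix.blockDiagonal' (fun i => ((Real.sqrt (p i) : ℂ)) • Vmat (σ i))).PosSemidef := by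
    rw [show (fun i => ((Real.sqrt (p i) : ℂ)) • Vmat (σ i))
        = fun i => ((Real.sqrt (Real.sqrt (p i)) : ℂ) • W (matSqrt (σ i))) *
            (((Real.sqrt (Real.sqrt (p i)) : ℂ) • W (matSqrt (σ i)))ᴴ)
      from funext fun i => smul_outer (Real.sqrt (p i)) (Real.sqrt_nonneg _) _]
    exact posSemidef_BD_outer _
  have hC2 : (Matrix.blockDiagonal' (fun i => ((Real.sqrt (p i) : ℂ)) • Vmat (σ i))) ^ 2
      = Matrix.blockDiagonal' (fun i => (p i : ℂ) • Vmat (σ i)) := by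
    rw [pow_two, ← Matrix.blockDiagonal'_mul]
    refine congrArg _ (funext fun i => ?_)
    rw [smul_mul_smul_comm, Vmat_mul_Vmat (hσ i) (hσtr i), ← Complex.ofReal_mul,
      Real.mul_self_sqrt (hp i)]
  have hsqrt : matSqrt (Matrix.blockDiagonal' (fun i => (p i : ℂ) • Vmat (σ i)))
      = Matrix.blockDiagonal' (fun i => ((Real.sqrt (p i) : ℂ)) • Vmat (σ i)) := by
    rw [matSqrt_psd hωpsd, ← matCFC_of_eq hωpsd.1,
      matCFC_blockDiagonal' _ _ (fun i => isHermitian_smul_real Vmat_herm (p i))]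
    exact congrArg _ (funext fun i =>
      matCFC_smul_Vmat (hσ i) (hσtr i) Real.sqrt Real.sqrt_zero (p i))
  -- pseudo-inverse of φ blockwise
  have hφblk : ∀ i, ((p i : ℂ) • (σ i ⊗ₖ (1 : Matrix (Fin (n i)) (Fin (n i)) ℂ))).IsHermitian :=
    fun i => isHermitian_smul_real (kroneckerOne_isHermitian (hσ i).1) (p i)
  have hpinv : matPinv (Matrix.blockDiagonal' fun i =>
        (p i : ℂ) • (σ i ⊗ₖ (1 : Matrix (Fin (n i)) (Fin (n i)) ℂ)))
      = Matrix.blockDiagonal' (fun i =>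
          matPinv ((p i : ℂ) • (σ i ⊗ₖ (1 : Matrix (Fin (n i)) (Fin (n i)) ℂ)))) := by
    rw [matPinv, matCFC_blockDiagonal' _ _ hφblk]
    rfl
  -- the middle matrix
  have hmid : matSqrt (Matrix.blockDiagonal' (fun i => (p i : ℂ) • Vmat (σ i))) *
        matPinv (Matrix.blockDiagonal' fun i =>
          (p i : ℂ) • (σ i ⊗ₖ (1 : Matrix (Fin (n i)) (Fin (n i)) ℂ))) *
        matSqrt (Matrix.blockDiagonal' (fun i => (p i : ℂ) • Vmat (σ i)))
      = Matrix.blockDiagonal' (fun i => ((rr i : ℝ) : ℂ) • Vmat (σ i)) := by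
    rw [hsqrt, hpinv, ← Matrix.blockDiagonal'_mul, ← Matrix.blockDiagonal'_mul]
    refine congrArg _ (funext fun i => ?_)
    exact mid_block (hσ i) (hσtr i) (hp i)
  -- logarithm of the middle matrix
  have hlog : matLog (Matrix.blockDiagonal' (fun i => ((rr i : ℝ) : ℂ) • Vmat (σ i)))
      = Matrix.blockDiagonal' (fun i => ((Real.log (rr i) : ℝ) : ℂ) • Vmat (σ i)) := by
    rw [matLog, matCFC_blockDiagonal' _ _ (fun i => isHermitian_smul_real Vmat_herm (rr i))]
    exact congrArg _ (funext fun i => matLog_smul_Vmat' (hσ i) (hσtr i) (rr i))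
  -- assemble
  rw [RBS, hmid, hlog, ← Matrix.blockDiagonal'_mul, Matrix.trace_blockDiagonal']
  have htermeq : ∀ i, (((p i : ℂ) • Vmat (σ i)) * (((Real.log (rr i) : ℝ) : ℂ) • Vmat (σ i))).trace
      = ((p i * Real.log (rr i) : ℝ) : ℂ) := by
    intro i
    rw [smul_mul_smul_comm, Vmat_mul_Vmat (hσ i) (hσtr i), Matrix.trace_smul,
      trace_Vmat (hσ i) (hσtr i), smul_eq_mul, mul_one, ← Complex.ofReal_mul]
  rw [Finset.sum_congr rfl (fun i _ => htermeq i), ← Complex.ofReal_sum, Complex.ofReal_re]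
  refine Finset.sum_congr rfl fun i _ => ?_
  by_cases h : p i = 0
  · simp [hrr, h]
  · simp [hrr, h]

end
end
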